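/- Two-point conditional structure of left-monotone couplings with constant barycenter: Let X ⊂ ℝ be a compact interval, let Z = Z₋ ∪ Z₊ be the union of two compact intervals Z₋ = [z̲₋, z̄₋] and Z₊ = [z̲₊, z̄₊], let σ_X be a non-atomic probability measure on X and σ_Z a probability measure on Z with barycenter y = ∫ z dσ_Z satisfying z̄₋ < y < z̲₊, and let F be the constant function F(x) = y. If π = σ_X ⊗ κ ∈ Π̄(F, σ_X, σ_Z) is left-monotone, then for σ_X-a.e. x the conditional probability κ(x, ·) is supported on exactly two points, κ(x, ·) = α₋(x) δ_{T₋(x)} + α₊(x) δ_{T₊(x)}, where T₋ : X → Z₋ is a decreasing map and T₊ : X → Z₊ is an increasing map. -/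

import Mathlib

open MeasureTheory ProbabilityTheory Filter Topology ENNReal

noncomputable section

namespace MOT

/-- Convex order of measures on ℝ. -/
def ConvexOrder (μ ν : Measure ℝ) : Prop :=
  ∀ φ : ℝ → ℝ, ConvexOn ℝ Set.univ φ → ∫ x, φ x ∂μ ≤ ∫ x, φ x ∂ν

/-- The (topological) support of a measure. -/
def msupport {α : Type*} [TopologicalSpace α] [MeasurableSpace α] (μ : Measure α) : Set α :=
  {x | ∀ U : Set α, IsOpen U → x ∈ U → μ U ≠ 0}

/-- `π` is a two-period martingale coupling of `μ` and `ν`. -/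
def IsMartCoupling2 (μ ν : Measure ℝ) (π : Measure (ℝ × ℝ)) : Prop :=
  π.map Prod.snd = ν ∧
  ∃ κ : Kernel ℝ ℝ, IsMarkovKernel κ ∧ π = μ ⊗ₘ κ ∧
    ∀ᵐ x ∂μ, ∫ y, y ∂(κ x) = x

/-- `π` is a three-period martingale coupling of `μ₁, μ₂, μ₃`. -/
def IsMartCoupling3 (μ₁ μ₂ μ₃ : Measure ℝ) (π : Measure (ℝ × ℝ × ℝ)) : Prop :=
  π.map (fun q => q.1) = μ₁ ∧
  π.map (fun q => q.2.1) = μ₂ ∧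
  π.map (fun q => q.2.2) = μ₃ ∧
  ∃ (κ₁ : Kernel ℝ ℝ) (κ₂ : Kernel (ℝ × ℝ) ℝ),
    IsMarkovKernel κ₁ ∧ IsMarkovKernel κ₂ ∧
    π = ((μ₁ ⊗ₘ κ₁) ⊗ₘ κ₂).map (fun q => (q.1.1, q.1.2, q.2)) ∧
    (∀ᵐ x ∂μ₁, ∫ y, y ∂(κ₁ x) = x) ∧
    (∀ᵐ q ∂(μ₁ ⊗ₘ κ₁), ∫ z, z ∂(κ₂ q) = q.2)

/-- Membership in `Π̄(F, σX, σZ)`. -/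
def MemPiBar (F : ℝ → ℝ) (σX σZ : Measure ℝ) (π : Measure (ℝ × ℝ)) : Prop :=
  π.map Prod.snd = σZ ∧
  ∃ κ : Kernel ℝ ℝ, IsMarkovKernel κ ∧ π = σX ⊗ₘ κ ∧
    ∀ᵐ x ∂σX, ∫ z, z ∂(κ x) = F x

/-- Left-monotonicity of a coupling on ℝ × ℝ. -/
def LeftMonotone (π : Measure (ℝ × ℝ)) : Prop :=
  ∀ x x' zm zp z' : ℝ, (x, zm) ∈ msupport π → (x, zp) ∈ msupport π →
    (x', z') ∈ msupport π → zm < zp → x < x' → z' ∉ Set.Ioo zm zp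


section helpers
variable {α : Type*} [TopologicalSpace α] [MeasurableSpace α] {μ : Measure α}

lemma not_mem_msupport {x : α} {U : Set α} (hU : IsOpen U) (hx : x ∈ U) (h0 : μ U = 0) :
    x ∉ msupport μ := fun h => h U hU hx h0

lemma msupport_subset_of_null {C : Set α} (hC : IsClosed C) (h : μ Cᶜ = 0) :
    msupport μ ⊆ C := by
  intro z hz
  by_contra hzC
  exact hz Cᶜ hC.isOpen_compl hzC h

lemma compl_msupport_eq : (msupport μ)ᶜ = ⋃₀ {U | IsOpen U ∧ μ U = 0} := by
  ext x
  simp only [Set.mem_compl_iff, msupport, Set.mem_setOf_eq, not_forall, Set.mem_sUnion]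
  constructor
  · rintro ⟨U, hU, hx, hμ⟩
    exact ⟨U, ⟨hU, not_not.mp hμ⟩, hx⟩
  · rintro ⟨U, ⟨hU, hμ⟩, hx⟩
    exact ⟨U, hU, hx, not_not.mpr hμ⟩

lemma isOpen_compl_msupport (μ : Measure α) : IsOpen (msupport μ)ᶜ := by
  rw [compl_msupport_eq]
  exact isOpen_sUnion fun U hU => hU.1

lemma isClosed_msupport (μ : Measure α) : IsClosed (msupport μ) :=
  by rw [← compl_compl (msupport μ)]; exact (isOpen_compl_msupport μ).isClosed_compl

lemma msupport_compl_null [SecondCountableTopology α] (μ : Measure α) :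
    μ (msupport μ)ᶜ = 0 := by
  obtain ⟨T, hTc, hTS, hT⟩ :=
    TopologicalSpace.isOpen_sUnion_countable {U | IsOpen U ∧ μ U = 0} (fun s hs => hs.1)
  rw [compl_msupport_eq, ← hT]
  exact (measure_sUnion_null_iff hTc).2 fun s hs => (hTS hs).2

lemma exists_mem_msupport [SecondCountableTopology α] {C : Set α}
    (h : μ C ≠ 0) : (C ∩ msupport μ).Nonempty := by
  by_contra hne
  rw [Set.not_nonempty_iff_eq_empty] at hne
  have hsub : C ⊆ (msupport μ)ᶜ := fun z hz => by
    intro hzs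
    exact Set.eq_empty_iff_forall_notMem.mp hne z ⟨hz, hzs⟩
  exact h (measure_mono_null hsub (msupport_compl_null μ))

end helpers

lemma two_point_measure (μ : Measure ℝ) {a b : ℝ} (hab : a ≠ b)
    (h : μ ({a, b} : Set ℝ)ᶜ = 0) :
    μ = μ {a} • Measure.dirac a + μ {b} • Measure.dirac b := by
  ext s hs
  have hdiff : μ (s \ {a, b}) = 0 :=
    measure_mono_null (Set.diff_subset_diff_left (Set.subset_univ s)) (by rwa [Set.compl_eq_univ_diff] at h)
  have hsplit : μ s = μ (s ∩ {a, b}) := by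
    have h1 := measure_inter_add_diff (μ := μ) s (t := ({a, b} : Set ℝ))
      (by measurability)
    rw [hdiff, add_zero] at h1
    exact h1.symm
  have hunion : s ∩ ({a, b} : Set ℝ) = (s ∩ {a}) ∪ (s ∩ {b}) := by
    rw [← Set.inter_union_distrib_left]
    rfl
  have hdisj : Disjoint (s ∩ {a}) (s ∩ {b}) := by
    refine Set.disjoint_left.mpr fun z hz hz' => ?_
    exact hab (hz.2.symm.trans hz'.2)
  have key : ∀ c : ℝ, μ (s ∩ {c}) = μ {c} * (s.indicator (1 : ℝ → ℝ≥0∞) c) := by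
    intro c
    by_cases hc : c ∈ s
    · rw [Set.inter_eq_self_of_subset_right (Set.singleton_subset_iff.mpr hc),
        Set.indicator_of_mem hc]
      simp
    · have : s ∩ {c} = ∅ := by
        ext z; simp only [Set.mem_inter_iff, Set.mem_singleton_iff, Set.mem_empty_iff_false,
          iff_false, not_and]
        rintro hz rfl; exact hc hz
      rw [this, Set.indicator_of_notMem hc]
      simp
  rw [hsplit, hunion, measure_union hdisj (hs.inter (measurableSet_singleton b)), key a, key b]
  simp [Measure.dirac_apply' _ hs, mul_comm]


lemma extend_antitone {G : Set ℝ} {f : ℝ → ℝ} {lo hi : ℝ} (hlohi : lo ≤ hi)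
    (hf : ∀ x ∈ G, f x ∈ Set.Icc lo hi)
    (hmono : ∀ x ∈ G, ∀ x' ∈ G, x ≤ x' → f x' ≤ f x) :
    ∃ g : ℝ → ℝ, (∀ x, g x ∈ Set.Icc lo hi) ∧ Antitone g ∧ ∀ x ∈ G, g x = f x := by
  classical
  set S : ℝ → Set ℝ := fun x => f '' {x' | x' ∈ G ∧ x ≤ x'} with hS
  have hbdd : ∀ x, BddAbove (S x) := fun x =>
    ⟨hi, by rintro _ ⟨x', hx', rfl⟩; exact (hf x' hx'.1).2⟩
  have hval : ∀ x, (if h : (S x).Nonempty then sSup (S x) else lo) ∈ Set.Icc lo hi := by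
    intro x
    by_cases h : (S x).Nonempty
    · rw [dif_pos h]
      obtain ⟨v, hv⟩ := h
      obtain ⟨x', hx', rfl⟩ := hv
      constructor
      · exact le_trans (hf x' hx'.1).1 (le_csSup (hbdd x) ⟨x', hx', rfl⟩)
      · exact csSup_le ⟨f x', ⟨x', hx', rfl⟩⟩ (by rintro _ ⟨x'', hx'', rfl⟩; exact (hf x'' hx''.1).2)
    · rw [dif_neg h]; exact ⟨le_refl lo, hlohi⟩
  refine ⟨fun x => if h : (S x).Nonempty then sSup (S x) else lo, hval, ?_, ?_⟩
  · intro x x₂ hx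
    dsimp only
    have hsub : S x₂ ⊆ S x := by
      rintro _ ⟨x', hx', rfl⟩; exact ⟨x', ⟨hx'.1, le_trans hx hx'.2⟩, rfl⟩
    by_cases h2 : (S x₂).Nonempty
    · rw [dif_pos h2, dif_pos (h2.mono hsub)]
      exact csSup_le_csSup (hbdd x) h2 hsub
    · rw [dif_neg h2]
      exact (hval x).1
  · intro x hxG
    dsimp only
    have hmem : f x ∈ S x := ⟨x, ⟨hxG, le_refl x⟩, rfl⟩
    rw [dif_pos ⟨f x, hmem⟩]
    refine le_antisymm ?_ (le_csSup (hbdd x) hmem)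
    refine csSup_le ⟨f x, hmem⟩ ?_
    rintro _ ⟨x', hx', rfl⟩
    exact hmono x hxG x' hx'.1 hx'.2

lemma extend_monotone {G : Set ℝ} {f : ℝ → ℝ} {lo hi : ℝ} (hlohi : lo ≤ hi)
    (hf : ∀ x ∈ G, f x ∈ Set.Icc lo hi)
    (hmono : ∀ x ∈ G, ∀ x' ∈ G, x ≤ x' → f x ≤ f x') :
    ∃ g : ℝ → ℝ, (∀ x, g x ∈ Set.Icc lo hi) ∧ Monotone g ∧ ∀ x ∈ G, g x = f x := by
  obtain ⟨g, hg1, hg2, hg3⟩ := extend_antitone (G := (fun x => -x) '' G) (f := fun x => f (-x))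
    hlohi (by rintro _ ⟨x, hx, rfl⟩; dsimp only; rw [neg_neg]; exact hf x hx)
    (by rintro _ ⟨x, hx, rfl⟩ _ ⟨x', hx', rfl⟩ h
        dsimp only at h ⊢
        rw [neg_neg, neg_neg]
        exact hmono x' hx' x hx (by linarith))
  exact ⟨fun x => g (-x), fun x => hg1 (-x), fun a b hab => hg2 (neg_le_neg hab),
    fun x hx => by simpa using hg3 (-x) ⟨x, hx, rfl⟩⟩


theorem two_point_conditional_structure
    (xlo xhi zml zmu zpl zpu y : ℝ)
    (hx : xlo ≤ xhi) (hzm : zml ≤ zmu) (hzp : zpl ≤ zpu)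
    (hsep₁ : zmu < y) (hsep₂ : y < zpl)
    (σX σZ : Measure ℝ) [IsProbabilityMeasure σX] [IsProbabilityMeasure σZ]
    (hσX : σX (Set.Icc xlo xhi)ᶜ = 0)
    (hσZ : σZ (Set.Icc zml zmu ∪ Set.Icc zpl zpu)ᶜ = 0)
    (hna : ∀ x : ℝ, σX {x} = 0)
    (hbar : y = ∫ z, z ∂σZ)
    (π : Measure (ℝ × ℝ)) (κ : Kernel ℝ ℝ) (hκ : IsMarkovKernel κ)
    (hπκ : π = σX ⊗ₘ κ)
    (hπ : MemPiBar (fun _ => y) σX σZ π)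
    (hlm : LeftMonotone π) :
    ∃ Tm Tp αm αp : ℝ → ℝ,
      (∀ x ∈ Set.Icc xlo xhi, Tm x ∈ Set.Icc zml zmu) ∧
      (∀ x ∈ Set.Icc xlo xhi, Tp x ∈ Set.Icc zpl zpu) ∧
      AntitoneOn Tm (Set.Icc xlo xhi) ∧
      MonotoneOn Tp (Set.Icc xlo xhi) ∧
      ∀ᵐ x ∂σX, 0 < αm x ∧ 0 < αp x ∧ αm x + αp x = 1 ∧
        κ x = ENNReal.ofReal (αm x) • Measure.dirac (Tm x) +
              ENNReal.ofReal (αp x) • Measure.dirac (Tp x) := by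
  classical
  haveI := hκ
  haveI : NoAtoms σX := ⟨hna⟩
  haveI : NullSingletonClass σX := ⟨hna⟩
  set Zm : Set ℝ := Set.Icc zml zmu with hZm_def
  set Zp : Set ℝ := Set.Icc zpl zpu with hZp_def
  set Z : Set ℝ := Zm ∪ Zp with hZ_def
  have hZclosed : IsClosed Z := isClosed_Icc.union isClosed_Icc
  have hZmeas : MeasurableSet Z := hZclosed.measurableSet
  obtain ⟨hmapsnd, κ', hκ', hπκ', hbar'⟩ := hπ
  haveI := hκ'
  -- a.e. the kernel lives on Z
  have aeZ : ∀ᵐ x ∂σX, κ x Zᶜ = 0 := by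
    have h0 : π (Prod.snd ⁻¹' Zᶜ) = 0 := by
      rw [← Measure.map_apply measurable_snd hZmeas.compl, hmapsnd]
      exact hσZ
    rw [hπκ, Measure.compProd_apply (measurable_snd hZmeas.compl)] at h0
    have hmeas : Measurable fun x => κ x (Prod.mk x ⁻¹' (Prod.snd ⁻¹' Zᶜ)) :=
      Kernel.measurable_kernel_prodMk_left (measurable_snd hZmeas.compl)
    have h1 := (lintegral_eq_zero_iff hmeas).mp h0
    filter_upwards [h1] with x hx
    exact hx
  -- a.e. the support of the kernel is inside the section of the support of π
  have aeSect : ∀ᵐ x ∂σX, ∀ z ∈ msupport (κ x), (x, z) ∈ msupport π := by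
    have hopen : IsOpen (msupport π)ᶜ := isOpen_compl_msupport π
    have h0 : (σX ⊗ₘ κ) (msupport π)ᶜ = 0 := by
      rw [← hπκ]
      exact msupport_compl_null π
    rw [Measure.compProd_apply hopen.measurableSet] at h0
    have hmeas : Measurable fun x => κ x (Prod.mk x ⁻¹' (msupport π)ᶜ) :=
      Kernel.measurable_kernel_prodMk_left hopen.measurableSet
    have h1 := (lintegral_eq_zero_iff hmeas).mp h0
    filter_upwards [h1] with x hx z hz
    have hclosed : IsClosed (Prod.mk x ⁻¹' msupport π) :=
      (isClosed_msupport π).preimage (Continuous.prodMk_right x)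
    have hnull : κ x (Prod.mk x ⁻¹' msupport π)ᶜ = 0 := by
      rw [← Set.preimage_compl]
      simpa using hx
    exact msupport_subset_of_null hclosed hnull hz
  -- a.e. barycenter is y
  have aeBar : ∀ᵐ x ∂σX, ∫ z, z ∂(κ x) = y := by
    haveI : IsFiniteMeasure π := by rw [hπκ]; infer_instance
    have hfst : π.fst = σX := by rw [hπκ]; exact Measure.fst_compProd σX κ
    have h1 : ∀ᵐ x ∂σX, κ x = π.condKernel x := by
      rw [← hfst]
      exact eq_condKernel_of_measure_eq_compProd κ (by rw [hfst]; exact hπκ)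
    have h2 : ∀ᵐ x ∂σX, κ' x = π.condKernel x := by
      rw [← hfst]
      exact eq_condKernel_of_measure_eq_compProd κ' (by rw [hfst]; exact hπκ')
    filter_upwards [h1, h2, hbar'] with x e1 e2 e3
    rw [e1, ← e2]
    exact e3
  have aeIcc : ∀ᵐ x ∂σX, x ∈ Set.Icc xlo xhi := by
    rw [ae_iff]
    exact hσX
  set G : Set ℝ := {x | x ∈ Set.Icc xlo xhi ∧ κ x Zᶜ = 0 ∧
    (∀ z ∈ msupport (κ x), (x, z) ∈ msupport π) ∧ ∫ z, z ∂(κ x) = y} with hG_def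
  have aeG : ∀ᵐ x ∂σX, x ∈ G := by
    filter_upwards [aeZ, aeSect, aeBar, aeIcc] with x h1 h2 h3 h4
    exact ⟨h4, h1, h2, h3⟩
  -- basic facts on G
  have hMassm : ∀ x ∈ G, κ x Zm ≠ 0 := by
    intro x hxG h0
    obtain ⟨-, hZ0, -, hbarx⟩ := hxG
    have hae : ∀ᵐ z ∂(κ x), z ∈ Zp := by
      have hsub : Zpᶜ ⊆ Zᶜ ∪ Zm := by
        intro z hz
        by_cases h : z ∈ Z
        · rcases h with h | h
          · exact Or.inr h
          · exact absurd h hz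
        · exact Or.inl h
      have hnull : κ x Zpᶜ = 0 := measure_mono_null hsub (measure_union_null hZ0 h0)
      rw [ae_iff]
      exact hnull
    have hint : Integrable (fun z => z) (κ x) := by
      refine Integrable.mono' (integrable_const (max |zpl| |zpu|)) aestronglyMeasurable_id ?_
      filter_upwards [hae] with z hz
      rw [Real.norm_eq_abs]
      exact abs_le_max_abs_abs hz.1 hz.2
    have hge : ∀ᵐ z ∂(κ x), zpl ≤ z := hae.mono fun z hz => hz.1
    have hle := integral_mono_ae (integrable_const zpl) hint hge
    rw [integral_const] at hle
    simp only [measure_univ, ENNReal.toReal_one, probReal_univ, one_smul] at hle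
    rw [hbarx] at hle
    linarith
  have hMassp : ∀ x ∈ G, κ x Zp ≠ 0 := by
    intro x hxG h0
    obtain ⟨-, hZ0, -, hbarx⟩ := hxG
    have hae : ∀ᵐ z ∂(κ x), z ∈ Zm := by
      have hsub : Zmᶜ ⊆ Zᶜ ∪ Zp := by
        intro z hz
        by_cases h : z ∈ Z
        · rcases h with h | h
          · exact absurd h hz
          · exact Or.inr h
        · exact Or.inl h
      have hnull : κ x Zmᶜ = 0 := measure_mono_null hsub (measure_union_null hZ0 h0)
      rw [ae_iff]
      exact hnull
    have hint : Integrable (fun z => z) (κ x) := by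
      refine Integrable.mono' (integrable_const (max |zml| |zmu|)) aestronglyMeasurable_id ?_
      filter_upwards [hae] with z hz
      rw [Real.norm_eq_abs]
      exact abs_le_max_abs_abs hz.1 hz.2
    have hge : ∀ᵐ z ∂(κ x), z ≤ zmu := hae.mono fun z hz => hz.2
    have hle := integral_mono_ae hint (integrable_const zmu) hge
    rw [integral_const] at hle
    simp only [measure_univ, ENNReal.toReal_one, probReal_univ, one_smul] at hle
    rw [hbarx] at hle
    linarith
  -- the chosen points
  set Tm0 : ℝ → ℝ := fun x =>
    if h : (Zm ∩ msupport (κ x)).Nonempty then h.choose else zml with hTm0_def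
  set Tp0 : ℝ → ℝ := fun x =>
    if h : (Zp ∩ msupport (κ x)).Nonempty then h.choose else zpl with hTp0_def
  have hTm0 : ∀ x ∈ G, Tm0 x ∈ Zm ∩ msupport (κ x) := by
    intro x hx
    have h : (Zm ∩ msupport (κ x)).Nonempty := exists_mem_msupport (hMassm x hx)
    simp only [hTm0_def, dif_pos h]
    exact h.choose_spec
  have hTp0 : ∀ x ∈ G, Tp0 x ∈ Zp ∩ msupport (κ x) := by
    intro x hx
    have h : (Zp ∩ msupport (κ x)).Nonempty := exists_mem_msupport (hMassp x hx)
    simp only [hTp0_def, dif_pos h]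
    exact h.choose_spec
  have hsuppπ : ∀ x ∈ G, ∀ z ∈ msupport (κ x), (x, z) ∈ msupport π :=
    fun x hx => hx.2.2.1
  -- the bad sets
  set Am : Set ℝ := {x | x ∈ G ∧ ∃ z1 z2 : ℝ, z1 < z2 ∧
    z1 ∈ Zm ∩ msupport (κ x) ∧ z2 ∈ Zm ∩ msupport (κ x)} with hAm_def
  set Ap : Set ℝ := {x | x ∈ G ∧ ∃ z1 z2 : ℝ, z1 < z2 ∧
    z1 ∈ Zp ∩ msupport (κ x) ∧ z2 ∈ Zp ∩ msupport (κ x)} with hAp_def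
  have hAmCount : Am.Countable := by
    set p : ℝ → ℝ × ℝ := fun x =>
      if h : ∃ z1 z2 : ℝ, z1 < z2 ∧ z1 ∈ Zm ∩ msupport (κ x) ∧ z2 ∈ Zm ∩ msupport (κ x)
      then (h.choose, h.choose_spec.choose) else (0, 1) with hp_def
    have hp : ∀ x ∈ Am, (p x).1 < (p x).2 ∧ (p x).1 ∈ Zm ∩ msupport (κ x) ∧
        (p x).2 ∈ Zm ∩ msupport (κ x) := by
      intro x hxm
      obtain ⟨hxG, hex⟩ := hxm
      simp only [hp_def, dif_pos hex]
      exact ⟨hex.choose_spec.choose_spec.1, hex.choose_spec.choose_spec.2.1,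
        hex.choose_spec.choose_spec.2.2⟩
    have key : ∀ x ∈ Am, ∀ x' ∈ Am, x < x' → (p x').2 ≤ (p x).1 := by
      intro x hxm x' hxm' hlt
      have hxG := hxm.1
      have hxG' := hxm'.1
      have h1 := hp x hxm
      have h2 := hp x' hxm'
      have hTp := hTp0 x hxG
      have hmem1 : (x, (p x).1) ∈ msupport π := hsuppπ x hxG _ h1.2.1.2
      have hmem2 : (x, Tp0 x) ∈ msupport π := hsuppπ x hxG _ hTp.2
      have hmem3 : (x', (p x').2) ∈ msupport π := hsuppπ x' hxG' _ h2.2.2.2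
      have hlt2 : (p x).1 < Tp0 x := by
        have := h1.2.1.1.2
        have := hTp.1.1
        linarith
      have hnot := hlm x x' ((p x).1) (Tp0 x) ((p x').2) hmem1 hmem2 hmem3 hlt2 hlt
      by_contra hcon
      push_neg at hcon
      refine hnot ⟨hcon, ?_⟩
      have := h2.2.2.1.2
      have := hTp.1.1
      linarith
    have hdisj : Am.PairwiseDisjoint (fun x => Set.Ioo (p x).1 (p x).2) := by
      intro x hxm x' hxm' hne
      simp only [Function.onFun]
      rcases lt_or_gt_of_ne hne with h | h
      · have hk := key x hxm x' hxm' h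
        refine Set.disjoint_left.mpr fun z hz hz' => ?_
        have := hz.1
        have := hz'.2
        linarith
      · have hk := key x' hxm' x hxm h
        refine Set.disjoint_left.mpr fun z hz hz' => ?_
        have := hz.2
        have := hz'.1
        linarith
    exact hdisj.countable_of_isOpen (fun x _ => isOpen_Ioo)
      (fun x hxm => Set.nonempty_Ioo.mpr (hp x hxm).1)
  have hApCount : Ap.Countable := by
    set p : ℝ → ℝ × ℝ := fun x =>
      if h : ∃ z1 z2 : ℝ, z1 < z2 ∧ z1 ∈ Zp ∩ msupport (κ x) ∧ z2 ∈ Zp ∩ msupport (κ x)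
      then (h.choose, h.choose_spec.choose) else (0, 1) with hp_def
    have hp : ∀ x ∈ Ap, (p x).1 < (p x).2 ∧ (p x).1 ∈ Zp ∩ msupport (κ x) ∧
        (p x).2 ∈ Zp ∩ msupport (κ x) := by
      intro x hxm
      obtain ⟨hxG, hex⟩ := hxm
      simp only [hp_def, dif_pos hex]
      exact ⟨hex.choose_spec.choose_spec.1, hex.choose_spec.choose_spec.2.1,
        hex.choose_spec.choose_spec.2.2⟩
    have key : ∀ x ∈ Ap, ∀ x' ∈ Ap, x < x' → (p x).2 ≤ (p x').1 := by
      intro x hxm x' hxm' hlt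
      have hxG := hxm.1
      have hxG' := hxm'.1
      have h1 := hp x hxm
      have h2 := hp x' hxm'
      have hTm := hTm0 x hxG
      have hmem1 : (x, Tm0 x) ∈ msupport π := hsuppπ x hxG _ hTm.2
      have hmem2 : (x, (p x).2) ∈ msupport π := hsuppπ x hxG _ h1.2.2.2
      have hmem3 : (x', (p x').1) ∈ msupport π := hsuppπ x' hxG' _ h2.2.1.2
      have hlt2 : Tm0 x < (p x).2 := by
        have := hTm.1.2
        have := h1.2.2.1.1
        linarith
      have hnot := hlm x x' (Tm0 x) ((p x).2) ((p x').1) hmem1 hmem2 hmem3 hlt2 hlt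
      by_contra hcon
      push_neg at hcon
      refine hnot ⟨?_, hcon⟩
      have := hTm.1.2
      have := h2.2.1.1.1
      linarith
    have hdisj : Ap.PairwiseDisjoint (fun x => Set.Ioo (p x).1 (p x).2) := by
      intro x hxm x' hxm' hne
      simp only [Function.onFun]
      rcases lt_or_gt_of_ne hne with h | h
      · have hk := key x hxm x' hxm' h
        refine Set.disjoint_left.mpr fun z hz hz' => ?_
        have := hz.2
        have := hz'.1
        linarith
      · have hk := key x' hxm' x hxm h
        refine Set.disjoint_left.mpr fun z hz hz' => ?_
        have := hz.1
        have := hz'.2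
        linarith
    exact hdisj.countable_of_isOpen (fun x _ => isOpen_Ioo)
      (fun x hxm => Set.nonempty_Ioo.mpr (hp x hxm).1)
  set G2 : Set ℝ := G \ (Am ∪ Ap) with hG2_def
  have aeG2 : ∀ᵐ x ∂σX, x ∈ G2 := by
    have h0 : σX (Am ∪ Ap) = 0 :=
      measure_union_null (hAmCount.measure_zero σX) (hApCount.measure_zero σX)
    have : ∀ᵐ x ∂σX, x ∉ Am ∪ Ap := by
      rw [ae_iff]
      refine measure_mono_null ?_ h0
      intro a ha
      simp only [Set.mem_setOf_eq, not_not] at ha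
      exact ha
    filter_upwards [aeG, this] with x h1 h2
    exact ⟨h1, h2⟩
  -- on G2, supports are singletons
  have hsingm : ∀ x ∈ G2, Zm ∩ msupport (κ x) = {Tm0 x} := by
    intro x hx2
    obtain ⟨hxG, hxnot⟩ := hx2
    have hmem := hTm0 x hxG
    ext z
    simp only [Set.mem_singleton_iff]
    constructor
    · intro hz
      by_contra hne
      have : x ∈ Am := by
        rcases lt_or_gt_of_ne hne with h | h
        · exact ⟨hxG, z, Tm0 x, h, hz, hmem⟩
        · exact ⟨hxG, Tm0 x, z, h, hmem, hz⟩
      exact hxnot (Set.mem_union_left _ this)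
    · rintro rfl
      exact hmem
  have hsingp : ∀ x ∈ G2, Zp ∩ msupport (κ x) = {Tp0 x} := by
    intro x hx2
    obtain ⟨hxG, hxnot⟩ := hx2
    have hmem := hTp0 x hxG
    ext z
    simp only [Set.mem_singleton_iff]
    constructor
    · intro hz
      by_contra hne
      have : x ∈ Ap := by
        rcases lt_or_gt_of_ne hne with h | h
        · exact ⟨hxG, z, Tp0 x, h, hz, hmem⟩
        · exact ⟨hxG, Tp0 x, z, h, hmem, hz⟩
      exact hxnot (Set.mem_union_right _ this)
    · rintro rfl
      exact hmem
  have hsupp2 : ∀ x ∈ G2, msupport (κ x) = {Tm0 x, Tp0 x} := by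
    intro x hx2
    have h1 := hsingm x hx2
    have h2 := hsingp x hx2
    apply Set.Subset.antisymm
    · intro z hz
      have hzZ : z ∈ Z := msupport_subset_of_null hZclosed hx2.1.2.1 hz
      rcases hzZ with h | h
      · have hzm : z ∈ Zm ∩ msupport (κ x) := ⟨h, hz⟩
        rw [h1] at hzm
        exact Or.inl hzm
      · have hzp : z ∈ Zp ∩ msupport (κ x) := ⟨h, hz⟩
        rw [h2] at hzp
        exact Or.inr hzp
    · intro z hz
      simp only [Set.mem_insert_iff, Set.mem_singleton_iff] at hz
      rcases hz with rfl | rfl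
      · exact (hTm0 x hx2.1).2
      · exact (hTp0 x hx2.1).2
  -- monotonicity on G2
  have hTmMono : ∀ x ∈ G2, ∀ x' ∈ G2, x ≤ x' → Tm0 x' ≤ Tm0 x := by
    intro x hx2 x' hx2' hle
    rcases eq_or_lt_of_le hle with rfl | hlt
    · exact le_refl _
    · have hm := hTm0 x hx2.1
      have hq := hTp0 x hx2.1
      have hm' := hTm0 x' hx2'.1
      have hnot := hlm x x' (Tm0 x) (Tp0 x) (Tm0 x') (hsuppπ x hx2.1 _ hm.2)
        (hsuppπ x hx2.1 _ hq.2) (hsuppπ x' hx2'.1 _ hm'.2)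
        (by have := hm.1.2; have := hq.1.1; linarith) hlt
      by_contra hcon
      push_neg at hcon
      refine hnot ⟨hcon, ?_⟩
      have := hm'.1.2
      have := hq.1.1
      linarith
  have hTpMono : ∀ x ∈ G2, ∀ x' ∈ G2, x ≤ x' → Tp0 x ≤ Tp0 x' := by
    intro x hx2 x' hx2' hle
    rcases eq_or_lt_of_le hle with rfl | hlt
    · exact le_refl _
    · have hm := hTm0 x hx2.1
      have hq := hTp0 x hx2.1
      have hq' := hTp0 x' hx2'.1
      have hnot := hlm x x' (Tm0 x) (Tp0 x) (Tp0 x') (hsuppπ x hx2.1 _ hm.2)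
        (hsuppπ x hx2.1 _ hq.2) (hsuppπ x' hx2'.1 _ hq'.2)
        (by have := hm.1.2; have := hq.1.1; linarith) hlt
      by_contra hcon
      push_neg at hcon
      refine hnot ⟨?_, hcon⟩
      have := hm.1.2
      have := hq'.1.1
      linarith
  -- extensions
  obtain ⟨Tm, hTm1, hTm2, hTm3⟩ := extend_antitone (G := G2) (f := Tm0) hzm
    (fun x hx => (hTm0 x hx.1).1) hTmMono
  obtain ⟨Tp, hTp1, hTp2, hTp3⟩ := extend_monotone (G := G2) (f := Tp0) hzp
    (fun x hx => (hTp0 x hx.1).1) hTpMono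
  refine ⟨Tm, Tp, fun x => (κ x {Tm x}).toReal, fun x => (κ x {Tp x}).toReal,
    fun x _ => hTm1 x, fun x _ => hTp1 x, hTm2.antitoneOn _, hTp2.monotoneOn _, ?_⟩
  filter_upwards [aeG2] with x hx
  have hTmx : Tm x = Tm0 x := hTm3 x hx
  have hTpx : Tp x = Tp0 x := hTp3 x hx
  have hm := hTm0 x hx.1
  have hq := hTp0 x hx.1
  have hne : Tm0 x ≠ Tp0 x := by
    have h1 := hm.1.2
    have h2 := hq.1.1
    intro h
    rw [← h] at h2
    linarith
  have hcompl : κ x ({Tm0 x, Tp0 x} : Set ℝ)ᶜ = 0 := by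
    have h0 := msupport_compl_null (κ x)
    rwa [hsupp2 x hx] at h0
  have htp := two_point_measure (κ x) hne hcompl
  have hposm : κ x {Tm0 x} ≠ 0 := by
    have hU : κ x (Set.Iio zpl) ≠ 0 := hm.2 _ isOpen_Iio (by
      simp only [Set.mem_Iio]
      have := hm.1.2
      linarith)
    intro h0
    apply hU
    have hsub : Set.Iio zpl ⊆ {Tm0 x} ∪ ({Tm0 x, Tp0 x} : Set ℝ)ᶜ := by
      intro z hz
      by_cases hzm : z = Tm0 x
      · exact Or.inl (by simp [hzm])
      · refine Or.inr ?_
        simp only [Set.mem_compl_iff, Set.mem_insert_iff, Set.mem_singleton_iff]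
        push_neg
        refine ⟨hzm, fun h => ?_⟩
        rw [h] at hz
        simp only [Set.mem_Iio] at hz
        have := hq.1.1
        linarith
    exact measure_mono_null hsub (measure_union_null h0 hcompl)
  have hposp : κ x {Tp0 x} ≠ 0 := by
    have hU : κ x (Set.Ioi zmu) ≠ 0 := hq.2 _ isOpen_Ioi (by
      simp only [Set.mem_Ioi]
      have := hq.1.1
      linarith)
    intro h0
    apply hU
    have hsub : Set.Ioi zmu ⊆ {Tp0 x} ∪ ({Tm0 x, Tp0 x} : Set ℝ)ᶜ := by
      intro z hz
      by_cases hzp : z = Tp0 x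
      · exact Or.inl (by simp [hzp])
      · refine Or.inr ?_
        simp only [Set.mem_compl_iff, Set.mem_insert_iff, Set.mem_singleton_iff]
        push_neg
        refine ⟨fun h => ?_, hzp⟩
        rw [h] at hz
        simp only [Set.mem_Ioi] at hz
        have := hm.1.2
        linarith
    exact measure_mono_null hsub (measure_union_null h0 hcompl)
  have hfin1 : κ x {Tm0 x} ≠ ⊤ := measure_ne_top _ _
  have hfin2 : κ x {Tp0 x} ≠ ⊤ := measure_ne_top _ _
  have hsum : κ x {Tm0 x} + κ x {Tp0 x} = 1 := by
    have hpair : κ x ({Tm0 x, Tp0 x} : Set ℝ) = 1 := by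
      have h1 := measure_add_measure_compl (μ := κ x)
        (s := ({Tm0 x, Tp0 x} : Set ℝ)) ((measurableSet_singleton (Tp0 x)).insert (Tm0 x))
      rw [hcompl, add_zero] at h1
      rw [h1]
      exact measure_univ
    rw [← hpair]
    have hsplit : ({Tm0 x, Tp0 x} : Set ℝ) = {Tm0 x} ∪ {Tp0 x} := by
      ext z
      simp only [Set.mem_insert_iff, Set.mem_union, Set.mem_singleton_iff]
    rw [hsplit]
    have hdisj : Disjoint ({Tm0 x} : Set ℝ) {Tp0 x} := by
      rw [Set.disjoint_singleton]
      exact hne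
    exact (measure_union hdisj (measurableSet_singleton _)).symm
  refine ⟨?_, ?_, ?_, ?_⟩
  · rw [hTmx]
    exact ENNReal.toReal_pos hposm hfin1
  · rw [hTpx]
    exact ENNReal.toReal_pos hposp hfin2
  · rw [hTmx, hTpx, ← ENNReal.toReal_add hfin1 hfin2, hsum]
    simp
  · rw [hTmx, hTpx, ENNReal.ofReal_toReal hfin1, ENNReal.ofReal_toReal hfin2]
    exact htp


end MOT
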